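/- Let n ≥ 4 be an even integer and q a nonzero complex number. At every critical point p of W_0 one has W_0(p) = n·z_2(p). Moreover, if p ∈ V(I_1) then W_0(p)^n = 4 n^n q, and if p ∈ V(I_2) then W_0(p) = 0. -/

import Mathlib

open Finset

/-- One-based access to the coordinates of a point `z ∈ ℂⁿ`: `zc n z j = z_j` for
`1 ≤ j ≤ n` (and `0` for out-of-range indices, which are never used). -/
noncomputable def zc (n : ℕ) (z : Fin n → ℂ) (j : ℕ) : ℂ :=
  if h : 1 ≤ j ∧ j ≤ n then z ⟨j - 1, by omega⟩ else 0

/-- The mirror Landau–Ginzburg potential of the quadric `Qⁿ`: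
`W₀(z) = q z₁² z_n/(z₁⋯z_n − 1) + z₂ + ∑_{i=2}^{n−1} z_i z_{i+1}`,
defined on `Zⁿ = {z ∈ ℂⁿ : z₁⋯z_n ≠ 1}`. -/
noncomputable def W0 (n : ℕ) (q : ℂ) (z : Fin n → ℂ) : ℂ :=
  q * (zc n z 1) ^ 2 * zc n z n / ((∏ j, z j) - 1)
    + zc n z 2 + ∑ i ∈ Finset.Icc 2 (n - 1), zc n z i * zc n z (i + 1)

/-- `z` is a critical point of `W₀` in `Zⁿ`: `z₁⋯z_n ≠ 1` and all `n` partial derivatives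
`∂W₀/∂z_j` vanish at `z`. -/
def IsCritPt (n : ℕ) (q : ℂ) (z : Fin n → ℂ) : Prop :=
  (∏ j, z j) ≠ 1 ∧
    ∀ j : Fin n, deriv (fun t => W0 n q (Function.update z j t)) (z j) = 0

/-- Membership in `V(I₁)`: `z_{2i+1} = 1` for `1 ≤ i ≤ n/2−1`, `z_{2i} = z_n` for
`1 ≤ i ≤ n/2`, `q z₁² = 1`, and `z₁ z_n^{n/2} = 2`. -/
def MemV1 (n : ℕ) (q : ℂ) (z : Fin n → ℂ) : Prop :=
  (∀ i : ℕ, 1 ≤ i → i ≤ n / 2 - 1 → zc n z (2 * i + 1) = 1) ∧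
    (∀ i : ℕ, 1 ≤ i → i ≤ n / 2 → zc n z (2 * i) = zc n z n) ∧
    q * (zc n z 1) ^ 2 = 1 ∧ zc n z 1 * (zc n z n) ^ (n / 2) = 2

/-- Membership in `V(I₂)`: `z_{2i+1} = (−1)^i` for `1 ≤ i ≤ n/2−1`, `z_{2i} = 0` for
`1 ≤ i ≤ n/2`, and `q z₁² = (−1)^{(n−2)/2}`. -/
def MemV2 (n : ℕ) (q : ℂ) (z : Fin n → ℂ) : Prop :=
  (∀ i : ℕ, 1 ≤ i → i ≤ n / 2 - 1 → zc n z (2 * i + 1) = (-1 : ℂ) ^ i) ∧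
    (∀ i : ℕ, 1 ≤ i → i ≤ n / 2 → zc n z (2 * i) = 0) ∧
    q * (zc n z 1) ^ 2 = (-1 : ℂ) ^ ((n - 2) / 2)

lemma zc_update (n : ℕ) (z : Fin n → ℂ) (j : Fin n) (t : ℂ) (m : ℕ) :
    zc n (Function.update z j t) m = if m = j.val + 1 then t else zc n z m := by
  have hj := j.isLt
  unfold zc
  by_cases h : 1 ≤ m ∧ m ≤ n
  · rw [dif_pos h]
    rcases eq_or_ne m (j.val + 1) with he | he
    · rw [if_pos he]
      have : (⟨m - 1, by omega⟩ : Fin n) = j := by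
        ext; simp [he]
      rw [this, Function.update_self]
    · rw [if_neg he, dif_pos h, Function.update_of_ne]
      intro hc
      apply he
      have := congrArg Fin.val hc
      simp at this
      omega
  · rw [dif_neg h, if_neg (by omega), dif_neg h]

lemma crit_eq (n : ℕ) (q : ℂ) (z : Fin n → ℂ) (hP : (∏ j, z j) ≠ 1) (j : Fin n)
    (hd : deriv (fun t => W0 n q (Function.update z j t)) (z j) = 0) :
    (q * (2 * zc n z 1 ^ 1 * (if 1 = j.val + 1 then (1:ℂ) else 0)) * zc n z n
        + q * zc n z 1 ^ 2 * (if n = j.val + 1 then (1:ℂ) else 0)) * ((∏ i, z i) - 1)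
      - q * zc n z 1 ^ 2 * zc n z n * (∏ i ∈ univ.erase j, z i)
      + ((if 2 = j.val + 1 then (1:ℂ) else 0)
        + ∑ i ∈ Icc 2 (n-1), ((if i = j.val + 1 then (1:ℂ) else 0) * zc n z (i+1)
            + zc n z i * (if i+1 = j.val + 1 then (1:ℂ) else 0))) * ((∏ i, z i) - 1) ^ 2 = 0 := by
  set t0 := z j with ht0
  have hupd : Function.update z j t0 = z := Function.update_eq_self j z
  have hu : ∀ m : ℕ, HasDerivAt (fun t => zc n (Function.update z j t) m)
      (if m = j.val + 1 then (1:ℂ) else 0) t0 := by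
    intro m
    have hfun : (fun t => zc n (Function.update z j t) m)
        = fun t => if m = j.val + 1 then t else zc n z m := by
      funext t; exact zc_update n z j t m
    rw [hfun]
    split_ifs
    · exact hasDerivAt_id t0
    · exact hasDerivAt_const t0 _
  have hprod : HasDerivAt (fun t => (∏ i, Function.update z j t i) - 1)
      (∏ i ∈ univ.erase j, z i) t0 := by
    have hfun : (fun t => (∏ i, Function.update z j t i) - 1)
        = fun t => t * (∏ i ∈ univ.erase j, z i) - 1 := by
      funext t
      rw [Finset.prod_update_of_mem (mem_univ j), ← Finset.erase_eq]
    rw [hfun]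
    simpa using ((hasDerivAt_id t0).mul_const (∏ i ∈ univ.erase j, z i)).sub_const 1
  have hnum : HasDerivAt (fun t => q * zc n (Function.update z j t) 1 ^ 2
      * zc n (Function.update z j t) n)
      ((q * (2 * zc n (Function.update z j t0) 1 ^ 1 * (if 1 = j.val + 1 then (1:ℂ) else 0)))
        * zc n (Function.update z j t0) n
        + q * zc n (Function.update z j t0) 1 ^ 2 * (if n = j.val + 1 then (1:ℂ) else 0)) t0 :=
    (((hu 1).pow 2).const_mul q).mul (hu n)
  have hden_ne : (∏ i, Function.update z j t0 i) - 1 ≠ 0 := by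
    rw [hupd]; exact sub_ne_zero.mpr hP
  have hfrac := hnum.fun_div hprod hden_ne
  have hsum : HasDerivAt (fun t => ∑ i ∈ Icc 2 (n-1),
      zc n (Function.update z j t) i * zc n (Function.update z j t) (i+1))
      (∑ i ∈ Icc 2 (n-1), ((if i = j.val + 1 then (1:ℂ) else 0) * zc n (Function.update z j t0) (i+1)
        + zc n (Function.update z j t0) i * (if i+1 = j.val + 1 then (1:ℂ) else 0))) t0 :=
    HasDerivAt.fun_sum (fun i _ => (hu i).mul (hu (i+1)))
  have htot := (hfrac.fun_add (hu 2)).fun_add hsum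
  have hW : (fun t => W0 n q (Function.update z j t))
      = fun t => q * zc n (Function.update z j t) 1 ^ 2 * zc n (Function.update z j t) n
          / ((∏ i, Function.update z j t i) - 1)
        + zc n (Function.update z j t) 2
        + ∑ i ∈ Icc 2 (n-1), zc n (Function.update z j t) i * zc n (Function.update z j t) (i+1) := by
    funext t; rfl
  rw [hW] at hd
  have hval := htot.deriv
  rw [hd] at hval
  rw [hupd] at hval
  have hD : (∏ i, z i) - 1 ≠ 0 := sub_ne_zero.mpr hP
  set I1 := (if 1 = (j:ℕ) + 1 then (1:ℂ) else 0) with hI1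
  set In := (if n = (j:ℕ) + 1 then (1:ℂ) else 0) with hIn
  set I2 := (if 2 = (j:ℕ) + 1 then (1:ℂ) else 0) with hI2
  set S := ∑ i ∈ Icc 2 (n-1), ((if i = (j:ℕ) + 1 then (1:ℂ) else 0) * zc n z (i+1)
      + zc n z i * (if i+1 = (j:ℕ) + 1 then (1:ℂ) else 0)) with hS
  set P := ∏ i, z i with hPdef
  set Pj := ∏ i ∈ univ.erase j, z i with hPj
  field_simp at hval
  linear_combination -hval

lemma zc_eq (n : ℕ) (z : Fin n → ℂ) (k : ℕ) (h1 : 1 ≤ k) (h2 : k ≤ n) :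
    zc n z k = z ⟨k - 1, by omega⟩ := dif_pos ⟨h1, h2⟩

lemma sum_eval (n : ℕ) (z : Fin n → ℂ) (k : ℕ) :
    ∑ i ∈ Icc 2 (n-1), ((if i = k then (1:ℂ) else 0) * zc n z (i+1)
        + zc n z i * (if i+1 = k then (1:ℂ) else 0))
    = (if 2 ≤ k ∧ k ≤ n-1 then zc n z (k+1) else 0)
      + (if 3 ≤ k ∧ k ≤ n then zc n z (k-1) else 0) := by
  rw [Finset.sum_add_distrib]
  congr 1
  · rw [Finset.sum_congr rfl (fun i _ => by rw [ite_mul, one_mul, zero_mul]),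
      Finset.sum_ite_eq' (Icc 2 (n-1)) k (fun i => zc n z (i+1))]
    simp only [Finset.mem_Icc]
  · by_cases hk : 3 ≤ k ∧ k ≤ n
    · rw [if_pos hk]
      have hcg : ∀ i ∈ Icc 2 (n-1), zc n z i * (if i+1 = k then (1:ℂ) else 0)
          = if i = k - 1 then zc n z i else 0 := by
        intro i _
        by_cases h : i + 1 = k
        · rw [if_pos h, if_pos (by omega), mul_one]
        · rw [if_neg h, if_neg (by omega), mul_zero]
      rw [Finset.sum_congr rfl hcg,
        Finset.sum_ite_eq' (Icc 2 (n-1)) (k-1) (fun i => zc n z i),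
        if_pos (by simp only [Finset.mem_Icc]; omega)]
    · rw [if_neg hk]
      apply Finset.sum_eq_zero
      intro i hi
      simp only [Finset.mem_Icc] at hi
      rw [if_neg (by omega), mul_zero]

lemma crit_eq' (n : ℕ) (q : ℂ) (z : Fin n → ℂ) (hP : (∏ j, z j) ≠ 1)
    (hder : ∀ j : Fin n, deriv (fun t => W0 n q (Function.update z j t)) (z j) = 0)
    (k : ℕ) (hk1 : 1 ≤ k) (hkn : k ≤ n) :
    ((q * (2 * zc n z 1 ^ 1 * (if 1 = k then (1:ℂ) else 0)) * zc n z n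
        + q * zc n z 1 ^ 2 * (if n = k then (1:ℂ) else 0)) * ((∏ i, z i) - 1)
      + ((if 2 = k then (1:ℂ) else 0)
        + ((if 2 ≤ k ∧ k ≤ n-1 then zc n z (k+1) else 0)
          + (if 3 ≤ k ∧ k ≤ n then zc n z (k-1) else 0))) * ((∏ i, z i) - 1) ^ 2) * zc n z k
      - q * zc n z 1 ^ 2 * zc n z n * (∏ i, z i) = 0 := by
  set j : Fin n := ⟨k-1, by omega⟩ with hjdef
  have hj : (j : ℕ) + 1 = k := by simp [hjdef]; omega
  have e := crit_eq n q z hP j (hder j)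
  simp only [hj] at e
  rw [sum_eval n z k] at e
  have hme := Finset.mul_prod_erase univ z (mem_univ j)
  rw [zc_eq n z k hk1 hkn, ← hjdef]
  linear_combination (z j) * e + (q * zc n z 1 ^ 2 * zc n z n) * hme

section eqs
variable (n : ℕ) (q : ℂ) (z : Fin n → ℂ)

lemma eqE1 (hn : 4 ≤ n) (hP : (∏ j, z j) ≠ 1)
    (hder : ∀ j : Fin n, deriv (fun t => W0 n q (Function.update z j t)) (z j) = 0) :
    q * zc n z 1 ^ 2 * zc n z n * ((∏ i, z i) - 2) = 0 := by
  have e := crit_eq' n q z hP hder 1 (by omega) (by omega)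
  rw [if_pos rfl, if_neg (by omega), if_neg (by omega), if_neg (by omega),
    if_neg (by omega)] at e
  linear_combination e

lemma eqE2 (hn : 4 ≤ n) (hP : (∏ j, z j) ≠ 1)
    (hder : ∀ j : Fin n, deriv (fun t => W0 n q (Function.update z j t)) (z j) = 0) :
    (zc n z 2 + zc n z 2 * zc n z 3) * ((∏ i, z i) - 1) ^ 2
      = q * zc n z 1 ^ 2 * zc n z n * (∏ i, z i) := by
  have e := crit_eq' n q z hP hder 2 (by omega) (by omega)
  rw [if_neg (by omega), if_neg (by omega), if_pos rfl, if_pos (by omega),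
    if_neg (by omega)] at e
  linear_combination e

lemma eqEmid (hn : 4 ≤ n) (hP : (∏ j, z j) ≠ 1)
    (hder : ∀ j : Fin n, deriv (fun t => W0 n q (Function.update z j t)) (z j) = 0)
    (m : ℕ) (hm2 : 2 ≤ m) (hmn : m ≤ n - 2) :
    (zc n z m * zc n z (m+1) + zc n z (m+1) * zc n z (m+2)) * ((∏ i, z i) - 1) ^ 2
      = q * zc n z 1 ^ 2 * zc n z n * (∏ i, z i) := by
  have e := crit_eq' n q z hP hder (m+1) (by omega) (by omega)
  rw [if_neg (by omega), if_neg (by omega), if_neg (by omega), if_pos (by omega),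
    if_pos (by omega), show m + 1 - 1 = m from rfl, show m + 1 + 1 = m + 2 from rfl] at e
  linear_combination e

lemma eqEn (hn : 4 ≤ n) (hP : (∏ j, z j) ≠ 1)
    (hder : ∀ j : Fin n, deriv (fun t => W0 n q (Function.update z j t)) (z j) = 0) :
    zc n z (n-1) * zc n z n * ((∏ i, z i) - 1) ^ 2 = q * zc n z 1 ^ 2 * zc n z n := by
  have e := crit_eq' n q z hP hder n (by omega) (by omega)
  rw [if_neg (by omega), if_pos rfl, if_neg (by omega), if_neg (by omega),
    if_pos (by omega)] at e
  linear_combination e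

end eqs

lemma sum_pairs (f : ℕ → ℂ) (c : ℂ) :
    ∀ m : ℕ, (∀ i, 2 ≤ i → i + 1 ≤ 2*m+1 → f i + f (i+1) = c) →
      ∑ i ∈ Icc 2 (2*m+1), f i = m * c := by
  intro m
  induction m with
  | zero =>
    intro _
    rw [Finset.Icc_eq_empty (by omega)]
    simp
  | succ m ih =>
    intro hp
    have h1 : 2*(m+1)+1 = (2*m+2)+1 := by ring
    rw [h1, Finset.sum_Icc_succ_top (by omega), show 2*m+2 = (2*m+1)+1 from by omega,
      Finset.sum_Icc_succ_top (by omega), ih (fun i ha hb => hp i ha (by omega))]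
    have e := hp (2*m+2) (by omega) (by omega)
    rw [show 2*m+1+1 = 2*m+2 from by omega]
    push_cast
    linear_combination e

lemma chain (g : ℕ → ℂ) (c : ℂ) (N : ℕ)
    (hp : ∀ i, 1 ≤ i → i + 1 ≤ N → g i + g (i+1) = c) :
    ∀ m, 2*m+1 ≤ N → g (2*m+1) = g 1 := by
  intro m
  induction m with
  | zero => intro _; rfl
  | succ m ih =>
    intro hle
    have e1 := hp (2*m+1) (by omega) (by omega)
    have e2 := hp (2*m+2) (by omega) (by omega)
    have e3 := ih (by omega)
    rw [show 2*(m+1)+1 = 2*m+2+1 from by omega]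
    rw [show 2*m+1+1 = 2*m+2 from by omega] at e1
    linear_combination e2 - e1 + e3

/-- **Critical values of the mirror LG potential of the quadric.**
For even `n ≥ 4`, `q ≠ 0`, and every critical point `p` of `W₀`: `W₀(p) = n·z₂(p)`;
if `p ∈ V(I₁)` then `W₀(p)ⁿ = 4 nⁿ q`; and if `p ∈ V(I₂)` then `W₀(p) = 0`. -/
theorem quadric_mirror_critical_values (n : ℕ) (hn : 4 ≤ n) (hev : Even n)
    (q : ℂ) (hq : q ≠ 0) (z : Fin n → ℂ) (hz : IsCritPt n q z) :
    W0 n q z = n * zc n z 2 ∧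
    (MemV1 n q z → (W0 n q z) ^ n = 4 * (n : ℂ) ^ n * q) ∧
    (MemV2 n q z → W0 n q z = 0) := by
  obtain ⟨hP, hder⟩ := hz
  obtain ⟨h, hh⟩ := hev
  have hh2 : 2 ≤ h := by omega
  have hD : (∏ i, z i) - 1 ≠ 0 := sub_ne_zero.mpr hP
  have hncast : (n:ℂ) = 2*(h:ℂ) := by rw [hh]; push_cast; ring
  set A := q * zc n z 1 ^ 2 * zc n z n with hA
  set P := ∏ i, z i with hPd
  have hA2 : A * (P - 2) = 0 := eqE1 n q z hn hP hder
  -- the odd chain gives z₂ D² = A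
  have hz2 : zc n z 2 * (P - 1)^2 = A := by
    have hpair : ∀ i, 1 ≤ i → i + 1 ≤ n - 1 →
        (fun i => (if i = 1 then zc n z 2 else zc n z i * zc n z (i+1)) * (P - 1)^2) i
        + (fun i => (if i = 1 then zc n z 2 else zc n z i * zc n z (i+1)) * (P - 1)^2) (i+1)
        = A * P := by
      intro i h1 h2
      simp only []
      rcases eq_or_ne i 1 with rfl | hi
      · rw [if_pos rfl, if_neg (by omega)]
        have := eqE2 n q z hn hP hder
        linear_combination this
      · rw [if_neg hi, if_neg (by omega)]
        have := eqEmid n q z hn hP hder i (by omega) (by omega)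
        rw [show i+1+1 = i+2 from by omega]
        linear_combination this
    have hc := chain _ (A * P) (n-1) hpair (h-1) (by omega)
    rw [show 2*(h-1)+1 = n-1 from by omega] at hc
    simp only [] at hc
    rw [if_neg (show ¬(n-1 = 1) by omega), if_pos trivial, show n-1+1 = n from by omega] at hc
    have := eqEn n q z hn hP hder
    linear_combination this - hc
  -- the pair sum
  have hsum : (∑ i ∈ Icc 2 (n-1), zc n z i * zc n z (i+1)) * (P - 1)^2
      = ((h:ℂ) - 1) * (A * P) := by
    have hs := sum_pairs (fun i => zc n z i * zc n z (i+1) * (P - 1)^2) (A * P) (h-1)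
      (by
        intro i h1 h2
        have := eqEmid n q z hn hP hder i h1 (by omega)
        rw [show i+1+1 = i+2 from by omega]
        linear_combination this)
    rw [show 2*(h-1)+1 = n-1 from by omega] at hs
    rw [Finset.sum_mul, hs, Nat.cast_sub (by omega)]
    push_cast
    ring
  have hW0D : W0 n q z * (P - 1)^2
      = A * (P - 1) + zc n z 2 * (P - 1)^2
        + (∑ i ∈ Icc 2 (n-1), zc n z i * zc n z (i+1)) * (P - 1)^2 := by
    rw [W0, ← hPd, ← hA]
    field_simp
  have key : (W0 n q z - n * zc n z 2) * (P - 1)^2 = 0 := by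
    linear_combination hW0D + hsum + (1 - (n:ℂ)) * hz2 + (h:ℂ) * hA2 - A * hncast
  have part1 : W0 n q z = n * zc n z 2 := by
    rcases mul_eq_zero.mp key with h0 | h0
    · exact sub_eq_zero.mp h0
    · exact absurd h0 (pow_ne_zero 2 hD)
  refine ⟨part1, ?_, ?_⟩
  · rintro ⟨hv1, hv2, hv3, hv4⟩
    have h2n : zc n z 2 = zc n z n := by
      have := hv2 1 le_rfl (by omega)
      norm_num at this
      exact this
    have h4 : zc n z 1 ^ 2 * zc n z n ^ n = 4 := by
      have hsq := congrArg (· ^ 2) hv4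
      simp only [mul_pow, ← pow_mul] at hsq
      rw [Nat.div_mul_cancel (show 2 ∣ n from ⟨h, by omega⟩)] at hsq
      norm_num at hsq
      exact hsq
    have hznn : zc n z n ^ n = 4 * q := by
      linear_combination q * h4 - (zc n z n ^ n) * hv3
    rw [part1, h2n, mul_pow, hznn]
    ring
  · rintro ⟨hv1, hv2, hv3⟩
    have h20 : zc n z 2 = 0 := by
      have := hv2 1 le_rfl (by omega)
      norm_num at this
      exact this
    rw [part1, h20, mul_zero]
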